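/- Let \(P\) be the transition kernel of an independence Metropolis–Hastings chain with target density \(\pi\) and proposal density \(q\), where there exists \(\beta > 0\) with \(q(\theta)/\pi(\theta) \ge \beta\) for all \(\theta \in \Theta\). Then the chain is uniformly ergodic: \(\|P^n(\theta,\cdot) - \pi\|_{TV} \le (1-\beta)^n\) for all \(\theta\) and \(n \ge 1\). -/

import Mathlib

open MeasureTheory
open scoped ENNReal

noncomputable def tvDist {Θ : Type*} [MeasurableSpace Θ] (μ ν : Measure Θ) : ℝ :=
  sSup {r : ℝ | ∃ A : Set Θ, MeasurableSet A ∧ r = |(μ A).toReal - (ν A).toReal|}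

noncomputable def mhKernel {Θ : Type*} [MeasurableSpace Θ] (lam : Measure Θ)
    (q : Θ → ℝ) (a : Θ → Θ → ℝ) (θ : Θ) : Measure Θ :=
  lam.withDensity (fun ζ => ENNReal.ofReal (q ζ * a θ ζ)) +
    ENNReal.ofReal (1 - ∫ t, q t * a θ t ∂lam) • Measure.dirac θ

noncomputable def bindIter {Θ : Type*} [MeasurableSpace Θ]
    (ρ : Measure Θ) (P : Θ → Measure Θ) : ℕ → Measure Θ
  | 0 => ρ
  | n + 1 => (bindIter ρ P n).bind P

section MH

variable {Θ : Type*} [MeasurableSpace Θ] (lam : Measure Θ) [SigmaFinite lam]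
  (π q : Θ → ℝ)

/-- acceptance probability -/
noncomputable def mhAcc : Θ → Θ → ℝ := fun θ' ζ => min 1 ((π ζ * q θ') / (π θ' * q ζ))

/-- sub-density of accepted move -/
noncomputable def mhG (θ ζ : Θ) : ℝ := q ζ * mhAcc π q θ ζ

lemma mhAcc_nonneg (hπpos : ∀ θ, 0 < π θ) (hqpos : ∀ θ, 0 < q θ) (θ ζ : Θ) :
    0 ≤ mhAcc π q θ ζ := by
  have := hπpos θ; have := hπpos ζ; have := hqpos θ; have := hqpos ζ
  unfold mhAcc; positivity

lemma mhAcc_le_one (θ ζ : Θ) : mhAcc π q θ ζ ≤ 1 := min_le_left _ _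

lemma mhG_eq (hπpos : ∀ θ, 0 < π θ) (hqpos : ∀ θ, 0 < q θ) (θ ζ : Θ) :
    mhG π q θ ζ = min (q ζ) (π ζ * q θ / π θ) := by
  unfold mhG mhAcc
  rw [mul_min_of_nonneg _ _ (hqpos ζ).le, mul_one]
  congr 1
  have h1 : π θ ≠ 0 := (hπpos θ).ne'
  have h2 : q ζ ≠ 0 := (hqpos ζ).ne'
  field_simp

lemma mhG_nonneg (hπpos : ∀ θ, 0 < π θ) (hqpos : ∀ θ, 0 < q θ) (θ ζ : Θ) :
    0 ≤ mhG π q θ ζ :=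
  mul_nonneg (hqpos ζ).le (mhAcc_nonneg π q hπpos hqpos θ ζ)

lemma mhG_le (hqpos : ∀ θ, 0 < q θ) (θ ζ : Θ) : mhG π q θ ζ ≤ q ζ := by
  have := mul_le_mul_of_nonneg_left (mhAcc_le_one π q θ ζ) (hqpos ζ).le
  simpa [mhG] using this

lemma mhG_measurable (hπmeas : Measurable π) (hqmeas : Measurable q) :
    Measurable (Function.uncurry fun θ ζ => mhG π q θ ζ) := by
  apply Measurable.mul
  · exact hqmeas.comp measurable_snd
  · apply Measurable.min measurable_const
    exact ((hπmeas.comp measurable_snd).mul (hqmeas.comp measurable_fst)).div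
      ((hπmeas.comp measurable_fst).mul (hqmeas.comp measurable_snd))

lemma mhG_measurable_snd (hπmeas : Measurable π) (hqmeas : Measurable q) (θ : Θ) :
    Measurable (fun ζ => mhG π q θ ζ) :=
  (mhG_measurable π q hπmeas hqmeas).comp measurable_prodMk_left

lemma mhG_integrable (hπmeas : Measurable π) (hqmeas : Measurable q)
    (hπpos : ∀ θ, 0 < π θ) (hqpos : ∀ θ, 0 < q θ) (hqint : Integrable q lam) (θ : Θ) :
    Integrable (fun ζ => mhG π q θ ζ) lam := by
  refine hqint.mono (mhG_measurable_snd π q hπmeas hqmeas θ).aestronglyMeasurable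
    (Filter.Eventually.of_forall fun ζ => ?_)
  simp only [Real.norm_eq_abs]
  rw [abs_of_nonneg (mhG_nonneg π q hπpos hqpos θ ζ)]
  exact (mhG_le π q hqpos θ ζ).trans (le_abs_self _)

/-- total acceptance mass, in ℝ≥0∞ -/
noncomputable def mhJ (θ : Θ) : ℝ≥0∞ := ∫⁻ ζ, ENNReal.ofReal (mhG π q θ ζ) ∂lam

lemma mhJ_eq (hπmeas : Measurable π) (hqmeas : Measurable q)
    (hπpos : ∀ θ, 0 < π θ) (hqpos : ∀ θ, 0 < q θ) (hqint : Integrable q lam) (θ : Θ) :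
    mhJ lam π q θ = ENNReal.ofReal (∫ ζ, mhG π q θ ζ ∂lam) :=
  (MeasureTheory.ofReal_integral_eq_lintegral_ofReal
    (mhG_integrable lam π q hπmeas hqmeas hπpos hqpos hqint θ)
    (Filter.Eventually.of_forall fun ζ => mhG_nonneg π q hπpos hqpos θ ζ)).symm

lemma lint_q (hqint : Integrable q lam) (hqone : ∫ θ, q θ ∂lam = 1)
    (hqpos : ∀ θ, 0 < q θ) : ∫⁻ ζ, ENNReal.ofReal (q ζ) ∂lam = 1 := by
  rw [← MeasureTheory.ofReal_integral_eq_lintegral_ofReal hqint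
    (Filter.Eventually.of_forall fun ζ => (hqpos ζ).le), hqone, ENNReal.ofReal_one]

lemma mhJ_le_one (hπpos : ∀ θ, 0 < π θ) (hqpos : ∀ θ, 0 < q θ)
    (hqint : Integrable q lam) (hqone : ∫ θ, q θ ∂lam = 1) (θ : Θ) :
    mhJ lam π q θ ≤ 1 := by
  rw [← lint_q lam q hqint hqone hqpos]
  exact lintegral_mono fun ζ => ENNReal.ofReal_le_ofReal (mhG_le π q hqpos θ ζ)

lemma mhJ_measurable (hπmeas : Measurable π) (hqmeas : Measurable q) :
    Measurable (mhJ lam π q) :=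
  Measurable.lintegral_prod_right
    (f := fun θ ζ => ENNReal.ofReal (mhG π q θ ζ))
    (ENNReal.measurable_ofReal.comp (mhG_measurable π q hπmeas hqmeas))

lemma mhP_apply (hπmeas : Measurable π) (hqmeas : Measurable q)
    (hπpos : ∀ θ, 0 < π θ) (hqpos : ∀ θ, 0 < q θ) (hqint : Integrable q lam)
    (θ : Θ) {A : Set Θ} (hA : MeasurableSet A) :
    mhKernel lam q (mhAcc π q) θ A =
      (∫⁻ ζ in A, ENNReal.ofReal (mhG π q θ ζ) ∂lam) +
        (1 - mhJ lam π q θ) * A.indicator (fun _ => (1:ℝ≥0∞)) θ := by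
  have h1 : ENNReal.ofReal (1 - ∫ t, q t * mhAcc π q θ t ∂lam) = 1 - mhJ lam π q θ := by
    have he : (∫ t, q t * mhAcc π q θ t ∂lam) = ∫ t, mhG π q θ t ∂lam := rfl
    rw [he, ENNReal.ofReal_sub 1 (integral_nonneg fun ζ => mhG_nonneg π q hπpos hqpos θ ζ),
      ENNReal.ofReal_one, mhJ_eq lam π q hπmeas hqmeas hπpos hqpos hqint θ]
  rw [mhKernel, Measure.add_apply, withDensity_apply _ hA, Measure.smul_apply,
    Measure.dirac_apply' θ hA, smul_eq_mul, h1]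
  rfl



lemma mhP_univ (hπmeas : Measurable π) (hqmeas : Measurable q)
    (hπpos : ∀ θ, 0 < π θ) (hqpos : ∀ θ, 0 < q θ) (hqint : Integrable q lam)
    (hqone : ∫ θ, q θ ∂lam = 1) (θ : Θ) :
    mhKernel lam q (mhAcc π q) θ Set.univ = 1 := by
  rw [mhP_apply lam π q hπmeas hqmeas hπpos hqpos hqint θ MeasurableSet.univ]
  rw [Measure.restrict_univ, Set.indicator_univ, mul_one]
  show mhJ lam π q θ + (1 - mhJ lam π q θ) = 1
  exact add_tsub_cancel_of_le (mhJ_le_one lam π q hπpos hqpos hqint hqone θ)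

lemma mhP_measurable (hπmeas : Measurable π) (hqmeas : Measurable q)
    (hπpos : ∀ θ, 0 < π θ) (hqpos : ∀ θ, 0 < q θ) (hqint : Integrable q lam) :
    Measurable (mhKernel lam q (mhAcc π q)) := by
  apply Measure.measurable_of_measurable_coe
  intro s hs
  have : (fun θ => mhKernel lam q (mhAcc π q) θ s) =
      fun θ => (∫⁻ ζ, ENNReal.ofReal (mhG π q θ ζ) ∂(lam.restrict s)) +
        (1 - mhJ lam π q θ) * s.indicator (fun _ => (1:ℝ≥0∞)) θ := by
    funext θ; exact mhP_apply lam π q hπmeas hqmeas hπpos hqpos hqint θ hs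
  rw [this]
  apply Measurable.add
  · exact Measurable.lintegral_prod_right
      (f := fun θ ζ => ENNReal.ofReal (mhG π q θ ζ))
      (ENNReal.measurable_ofReal.comp (mhG_measurable π q hπmeas hqmeas))
  · exact ((measurable_const.sub (mhJ_measurable lam π q hπmeas hqmeas)).mul
      (measurable_const.indicator hs))

lemma mhP_coe_measurable (hπmeas : Measurable π) (hqmeas : Measurable q)
    (hπpos : ∀ θ, 0 < π θ) (hqpos : ∀ θ, 0 < q θ) (hqint : Integrable q lam)
    {A : Set Θ} (hA : MeasurableSet A) :
    Measurable (fun θ => mhKernel lam q (mhAcc π q) θ A) :=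
  (Measure.measurable_coe hA).comp
    (mhP_measurable lam π q hπmeas hqmeas hπpos hqpos hqint)

lemma mhP_minor (hπmeas : Measurable π) (hqmeas : Measurable q)
    (hπpos : ∀ θ, 0 < π θ) (hqpos : ∀ θ, 0 < q θ) (hqint : Integrable q lam)
    {β : ℝ} (hβ : 0 < β) (hratio : ∀ θ, β ≤ q θ / π θ)
    (θ : Θ) {A : Set Θ} (hA : MeasurableSet A) :
    ENNReal.ofReal β * (lam.withDensity fun t => ENNReal.ofReal (π t)) A ≤
      mhKernel lam q (mhAcc π q) θ A := by
  have hge : ∀ ζ, β * π ζ ≤ mhG π q θ ζ := by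
    intro ζ
    rw [mhG_eq π q hπpos hqpos θ ζ]
    refine le_min ?_ ?_
    · have := (le_div_iff₀ (hπpos ζ)).mp (hratio ζ)
      linarith
    · rw [mul_div_assoc]
      have h2 : β ≤ q θ / π θ := hratio θ
      calc β * π ζ = π ζ * β := mul_comm _ _
        _ ≤ π ζ * (q θ / π θ) := by
            exact mul_le_mul_of_nonneg_left h2 (hπpos ζ).le
  rw [mhP_apply lam π q hπmeas hqmeas hπpos hqpos hqint θ hA, withDensity_apply _ hA]
  calc ENNReal.ofReal β * ∫⁻ t in A, ENNReal.ofReal (π t) ∂lam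
      = ∫⁻ t in A, ENNReal.ofReal β * ENNReal.ofReal (π t) ∂lam := by
        exact (lintegral_const_mul _ (hπmeas.ennreal_ofReal)).symm
    _ ≤ ∫⁻ t in A, ENNReal.ofReal (mhG π q θ t) ∂lam := by
        refine lintegral_mono fun t => ?_
        rw [← ENNReal.ofReal_mul hβ.le]
        exact ENNReal.ofReal_le_ofReal (hge t)
    _ ≤ _ := le_add_right le_rfl

lemma mhG_symm (hπpos : ∀ θ, 0 < π θ) (hqpos : ∀ θ, 0 < q θ) (θ ζ : Θ) :
    π θ * mhG π q θ ζ = π ζ * mhG π q ζ θ := by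
  rw [mhG_eq π q hπpos hqpos, mhG_eq π q hπpos hqpos,
    mul_min_of_nonneg _ _ (hπpos θ).le, mul_min_of_nonneg _ _ (hπpos ζ).le]
  have h1 : π θ * (π ζ * q θ / π θ) = π ζ * q θ := by
    rw [mul_comm, div_mul_cancel₀ _ (hπpos θ).ne']
  have h2 : π ζ * (π θ * q ζ / π ζ) = π θ * q ζ := by
    rw [mul_comm, div_mul_cancel₀ _ (hπpos ζ).ne']
  rw [h1, h2, min_comm]

lemma mhP_stationary (hπmeas : Measurable π) (hqmeas : Measurable q)
    (hπpos : ∀ θ, 0 < π θ) (hqpos : ∀ θ, 0 < q θ) (hqint : Integrable q lam)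
    (hqone : ∫ θ, q θ ∂lam = 1) :
    (lam.withDensity fun t => ENNReal.ofReal (π t)).bind (mhKernel lam q (mhAcc π q)) =
      lam.withDensity fun t => ENNReal.ofReal (π t) := by
  have hJm := mhJ_measurable lam π q hπmeas hqmeas
  have hJ1 := mhJ_le_one lam π q hπpos hqpos hqint hqone
  have hFmeas : Measurable (Function.uncurry fun θ ζ => ENNReal.ofReal (π θ * mhG π q θ ζ)) := by
    apply Measurable.ennreal_ofReal
    exact (hπmeas.comp measurable_fst).mul (mhG_measurable π q hπmeas hqmeas)
  ext A hA
  rw [Measure.bind_apply hA (mhP_measurable lam π q hπmeas hqmeas hπpos hqpos hqint).aemeasurable,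
    lintegral_withDensity_eq_lintegral_mul lam hπmeas.ennreal_ofReal
      (mhP_coe_measurable lam π q hπmeas hqmeas hπpos hqpos hqint hA)]
  have key : ∀ θ, ((fun t => ENNReal.ofReal (π t)) * fun t => mhKernel lam q (mhAcc π q) t A) θ =
      (∫⁻ ζ in A, ENNReal.ofReal (π θ * mhG π q θ ζ) ∂lam) +
        A.indicator (fun t => ENNReal.ofReal (π t) * (1 - mhJ lam π q t)) θ := by
    intro θ
    show ENNReal.ofReal (π θ) * mhKernel lam q (mhAcc π q) θ A = _
    rw [mhP_apply lam π q hπmeas hqmeas hπpos hqpos hqint θ hA, mul_add]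
    congr 1
    · rw [← lintegral_const_mul _ (mhG_measurable_snd π q hπmeas hqmeas θ).ennreal_ofReal]
      congr 1 with ζ
      rw [ENNReal.ofReal_mul (hπpos θ).le]
    · by_cases hθ : θ ∈ A
      · simp [Set.indicator_of_mem hθ, mul_comm]
      · simp [Set.indicator_of_notMem hθ]
  rw [lintegral_congr key, lintegral_add_left
    (Measurable.lintegral_prod_right
      (f := fun θ ζ => ENNReal.ofReal (π θ * mhG π q θ ζ)) hFmeas),
    lintegral_indicator hA]
  have hswap : (∫⁻ θ, ∫⁻ ζ in A, ENNReal.ofReal (π θ * mhG π q θ ζ) ∂lam ∂lam) =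
      ∫⁻ ζ in A, ENNReal.ofReal (π ζ) * mhJ lam π q ζ ∂lam := by
    rw [lintegral_lintegral_swap hFmeas.aemeasurable]
    refine lintegral_congr fun ζ => ?_
    calc (∫⁻ θ, ENNReal.ofReal (π θ * mhG π q θ ζ) ∂lam)
        = ∫⁻ θ, ENNReal.ofReal (π ζ) * ENNReal.ofReal (mhG π q ζ θ) ∂lam := by
          refine lintegral_congr fun θ => ?_
          rw [mhG_symm π q hπpos hqpos θ ζ, ENNReal.ofReal_mul (hπpos ζ).le]
      _ = ENNReal.ofReal (π ζ) * mhJ lam π q ζ := by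
          rw [lintegral_const_mul _ (mhG_measurable_snd π q hπmeas hqmeas ζ).ennreal_ofReal]
          rfl
  rw [hswap, withDensity_apply _ hA,
    ← lintegral_add_left (f := fun ζ => ENNReal.ofReal (π ζ) * mhJ lam π q ζ)
      (hπmeas.ennreal_ofReal.mul hJm)]
  refine lintegral_congr fun t => ?_
  rw [← mul_add, add_tsub_cancel_of_le (hJ1 t), mul_one]

lemma bind_add_meas {Θ : Type*} [MeasurableSpace Θ] {P : Θ → Measure Θ}
    (hP : Measurable P) (μ ν : Measure Θ) :
    (μ + ν).bind P = μ.bind P + ν.bind P := by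
  ext s hs
  simp only [Measure.bind_apply hs hP.aemeasurable, Measure.add_apply, lintegral_add_measure]

lemma bind_smul_meas {Θ : Type*} [MeasurableSpace Θ] {P : Θ → Measure Θ}
    (hP : Measurable P) (k : ℝ≥0∞) (μ : Measure Θ) :
    (k • μ).bind P = k • μ.bind P := by
  ext s hs
  simp only [Measure.bind_apply hs hP.aemeasurable, Measure.smul_apply, lintegral_smul_measure,
    smul_eq_mul]

lemma meas_add_cancel {Θ : Type*} [MeasurableSpace Θ] {X Y D : Measure Θ}
    (hD : D Set.univ ≠ ⊤) (h : X + D = Y + D) : X = Y := by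
  ext s hs
  have h2 : X s + D s = Y s + D s := by
    have := congrArg (fun m : Measure Θ => m s) h
    simpa [Measure.add_apply] using this
  have hDs : D s ≠ ⊤ := fun ht =>
    hD (top_le_iff.mp (ht ▸ measure_mono (Set.subset_univ s)))
  rw [add_comm (X s) _, add_comm (Y s) _] at h2
  exact (ENNReal.add_right_inj hDs).mp h2

lemma bind_mass {Θ : Type*} [MeasurableSpace Θ] {P : Θ → Measure Θ}
    (hP : Measurable P) (hPu : ∀ θ, P θ Set.univ = 1) (ρ : Measure Θ) :
    (ρ.bind P) Set.univ = ρ Set.univ := by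
  rw [Measure.bind_apply MeasurableSet.univ hP.aemeasurable]
  simp [hPu]

lemma bind_decompose {Θ : Type*} [MeasurableSpace Θ] {P : Θ → Measure Θ}
    (hP : Measurable P) (hPu : ∀ θ, P θ Set.univ = 1)
    {μπ : Measure Θ} (hμπ : μπ Set.univ = 1) {b : ℝ≥0∞} (hb : b ≤ 1)
    (hminor : ∀ θ s, MeasurableSet s → b * μπ s ≤ P θ s)
    (ρ : Measure Θ) (hρ : ρ Set.univ ≠ ⊤) :
    ∃ σ : Measure Θ, ρ.bind P = (b * ρ Set.univ) • μπ + σ ∧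
      σ Set.univ = (1 - b) * ρ Set.univ := by
  have hle : (b * ρ Set.univ) • μπ ≤ ρ.bind P := by
    rw [Measure.le_iff]
    intro s hs
    rw [Measure.bind_apply hs hP.aemeasurable, Measure.smul_apply, smul_eq_mul]
    calc b * ρ Set.univ * μπ s = ∫⁻ _, b * μπ s ∂ρ := by
          rw [lintegral_const]; ring
      _ ≤ ∫⁻ θ, P θ s ∂ρ := lintegral_mono fun θ => hminor θ s hs
  haveI : IsFiniteMeasure ((b * ρ Set.univ) • μπ) := by
    constructor
    rw [Measure.smul_apply, smul_eq_mul, hμπ, mul_one]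
    calc b * ρ Set.univ ≤ 1 * ρ Set.univ := mul_le_mul_left hb _
      _ = ρ Set.univ := one_mul _
      _ < ⊤ := hρ.lt_top
  refine ⟨ρ.bind P - (b * ρ Set.univ) • μπ, ?_, ?_⟩
  · rw [add_comm]
    exact (Measure.sub_add_cancel_of_le hle).symm
  · rw [Measure.sub_apply MeasurableSet.univ hle, bind_mass hP hPu,
      Measure.smul_apply, smul_eq_mul, hμπ, mul_one,
      ENNReal.sub_mul (fun _ _ => hρ), one_mul]

end MH

theorem stmt14 {Θ : Type*} [MeasurableSpace Θ] (lam : Measure Θ) [SigmaFinite lam]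
    (π q : Θ → ℝ) (hπmeas : Measurable π) (hqmeas : Measurable q)
    (hπpos : ∀ θ, 0 < π θ) (hqpos : ∀ θ, 0 < q θ)
    (hπint : Integrable π lam) (hqint : Integrable q lam)
    (hπone : ∫ θ, π θ ∂lam = 1) (hqone : ∫ θ, q θ ∂lam = 1)
    (β : ℝ) (hβ : 0 < β) (hratio : ∀ θ, β ≤ q θ / π θ) :
    ∀ (θ : Θ) (n : ℕ), 1 ≤ n →
      tvDist
        (bindIter (Measure.dirac θ)
          (mhKernel lam q (fun θ' ζ => min 1 ((π ζ * q θ') / (π θ' * q ζ)))) n)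
        (lam.withDensity fun t => ENNReal.ofReal (π t))
      ≤ (1 - β) ^ n := by
  intro θ0 n hn
  show tvDist (bindIter (Measure.dirac θ0) (mhKernel lam q (mhAcc π q)) n)
    (lam.withDensity fun t => ENNReal.ofReal (π t)) ≤ (1 - β) ^ n
  set P : Θ → Measure Θ := mhKernel lam q (mhAcc π q) with hPdef
  set μπ : Measure Θ := lam.withDensity fun t => ENNReal.ofReal (π t) with hμπdef
  have hP : Measurable P := mhP_measurable lam π q hπmeas hqmeas hπpos hqpos hqint
  have hPu : ∀ θ, P θ Set.univ = 1 :=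
    mhP_univ lam π q hπmeas hqmeas hπpos hqpos hqint hqone
  have hμπu : μπ Set.univ = 1 := by
    rw [hμπdef, withDensity_apply _ MeasurableSet.univ, Measure.restrict_univ,
      lint_q lam π hπint hπone hπpos]
  have hstat : μπ.bind P = μπ :=
    mhP_stationary lam π q hπmeas hqmeas hπpos hqpos hqint hqone
  have hβππ : ∀ θ, β * π θ ≤ q θ := fun θ => by
    have := (le_div_iff₀ (hπpos θ)).mp (hratio θ); linarith
  have hβ1 : β ≤ 1 := by
    have h := integral_mono (hπint.const_mul β) hqint hβππ
    rw [integral_const_mul, hπone, hqone, mul_one] at h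
    exact h
  set b : ℝ≥0∞ := ENNReal.ofReal β with hbdef
  set c : ℝ≥0∞ := ENNReal.ofReal (1 - β) with hcdef
  have hbc : b + c = 1 := by
    rw [hbdef, hcdef, ← ENNReal.ofReal_add hβ.le (by linarith)]
    norm_num
  have hb1 : b ≤ 1 := by
    rw [hbdef, ← ENNReal.ofReal_one]; exact ENNReal.ofReal_le_ofReal hβ1
  have hcne : c ≠ ⊤ := ENNReal.ofReal_ne_top
  have hc : c = 1 - b :=
    ENNReal.eq_sub_of_add_eq ENNReal.ofReal_ne_top (by rw [add_comm]; exact hbc)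
  have hminor : ∀ θ s, MeasurableSet s → b * μπ s ≤ P θ s := fun θ s hs =>
    mhP_minor lam π q hπmeas hqmeas hπpos hqpos hqint hβ hratio θ hs
  have hμn : ∀ m : ℕ, (bindIter (Measure.dirac θ0) P m) Set.univ = 1 := by
    intro m
    induction m with
    | zero => simp [bindIter]
    | succ k ih =>
      show ((bindIter (Measure.dirac θ0) P k).bind P) Set.univ = 1
      rw [bind_mass hP hPu, ih]
  have key : ∀ m : ℕ, 1 ≤ m → ∃ α γ : Measure Θ,
      α Set.univ = γ Set.univ ∧ γ Set.univ ≤ 1 ∧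
      bindIter (Measure.dirac θ0) P m + (c ^ m) • γ = μπ + (c ^ m) • α := by
    intro m hm
    induction m, hm using Nat.le_induction with
    | base =>
      have h1 : bindIter (Measure.dirac θ0) P 1 = (Measure.dirac θ0).bind P := rfl
      obtain ⟨σ, hσe, hσu⟩ := bind_decompose hP hPu hμπu hb1 hminor (Measure.dirac θ0)
        (by simp)
      have hdu : (Measure.dirac θ0 : Measure Θ) Set.univ = 1 := by simp
      rw [hdu, mul_one] at hσe hσu
      rw [← hc] at hσu
      by_cases hc0 : c = 0
      · refine ⟨0, 0, rfl, by simp, ?_⟩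
        have hb' : b = 1 := by
          have := hbc; rw [hc0, add_zero] at this; exact this
        have hσ0 : σ = 0 := by
          apply Measure.measure_univ_eq_zero.mp
          rw [hσu, hc0]
        rw [smul_zero, add_zero, add_zero, h1, hσe, hσ0, hb', one_smul, add_zero]
      · refine ⟨c⁻¹ • σ, μπ, ?_, le_of_eq hμπu, ?_⟩
        · rw [Measure.smul_apply, smul_eq_mul, hσu, ENNReal.inv_mul_cancel hc0 hcne, hμπu]
        · rw [pow_one, h1, hσe, smul_smul, ENNReal.mul_inv_cancel hc0 hcne, one_smul,
            add_right_comm, ← add_smul, hbc, one_smul]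
    | succ k hk ih =>
      obtain ⟨α, γ, hm', hγ1, hE⟩ := ih
      have hα1 : α Set.univ ≤ 1 := hm' ▸ hγ1
      have hγne : γ Set.univ ≠ ⊤ := (hγ1.trans_lt ENNReal.one_lt_top).ne
      have hαne : α Set.univ ≠ ⊤ := (hα1.trans_lt ENNReal.one_lt_top).ne
      have hsucc : bindIter (Measure.dirac θ0) P (k + 1) =
        (bindIter (Measure.dirac θ0) P k).bind P := rfl
      by_cases hc0 : c = 0
      · refine ⟨0, 0, rfl, by simp, ?_⟩
        have hck : c ^ k = 0 := by rw [hc0]; exact zero_pow (by omega)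
        rw [hck, zero_smul, zero_smul, add_zero, add_zero] at hE
        rw [smul_zero, add_zero, add_zero, hsucc, hE, hstat]
      · have hbind := congrArg (fun m : Measure Θ => m.bind P) hE
        simp only [bind_add_meas hP, bind_smul_meas hP] at hbind
        rw [hstat] at hbind
        obtain ⟨σγ, hσγe, hσγu⟩ := bind_decompose hP hPu hμπu hb1 hminor γ hγne
        obtain ⟨σα, hσαe, hσαu⟩ := bind_decompose hP hPu hμπu hb1 hminor α hαne
        rw [hm'] at hσαe hσαu
        rw [← hc] at hσγu hσαu
        set D : Measure Θ := (c ^ k * (b * γ Set.univ)) • μπ with hDdef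
        have hDne : D Set.univ ≠ ⊤ := by
          rw [hDdef, Measure.smul_apply, smul_eq_mul, hμπu, mul_one]
          exact ENNReal.mul_ne_top (ENNReal.pow_ne_top hcne)
            (ENNReal.mul_ne_top ENNReal.ofReal_ne_top hγne)
        have h1 : (bindIter (Measure.dirac θ0) P (k+1)) + (c ^ k) • (γ.bind P) =
            ((bindIter (Measure.dirac θ0) P (k+1)) + (c ^ k) • σγ) + D := by
          rw [hσγe, smul_add, smul_smul, hDdef]
          abel
        have h2 : μπ + (c ^ k) • (α.bind P) = (μπ + (c ^ k) • σα) + D := by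
          rw [hσαe, smul_add, smul_smul, hDdef]
          abel
        rw [← hsucc] at hbind
        rw [h1, h2] at hbind
        have hE' := meas_add_cancel hDne hbind
        refine ⟨c⁻¹ • σα, c⁻¹ • σγ, ?_, ?_, ?_⟩
        · rw [Measure.smul_apply, Measure.smul_apply, smul_eq_mul, smul_eq_mul,
            hσγu, hσαu]
        · rw [Measure.smul_apply, smul_eq_mul, hσγu, ← mul_assoc,
            ENNReal.inv_mul_cancel hc0 hcne, one_mul]
          exact hγ1
        · have hsm : ∀ σ : Measure Θ, (c ^ (k+1)) • (c⁻¹ • σ) = (c ^ k) • σ := by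
            intro σ
            rw [smul_smul, pow_succ, mul_assoc, ENNReal.mul_inv_cancel hc0 hcne, mul_one]
          rw [hsm, hsm]
          exact hE'
  -- conclusion
  obtain ⟨α, γ, hm', hγ1, hE⟩ := key n hn
  have hα1 : α Set.univ ≤ 1 := hm' ▸ hγ1
  have h1β : (0:ℝ) ≤ 1 - β := by linarith
  refine Real.sSup_le ?_ (pow_nonneg h1β n)
  rintro r ⟨A, hA, rfl⟩
  have hEA : (bindIter (Measure.dirac θ0) P n) A + c ^ n * γ A
      = μπ A + c ^ n * α A := by
    have := congrArg (fun m : Measure Θ => m A) hE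
    simpa [Measure.add_apply, Measure.smul_apply, smul_eq_mul] using this
  have hμnA : (bindIter (Measure.dirac θ0) P n) A ≠ ⊤ :=
    ((measure_mono (Set.subset_univ A)).trans_lt
      (by rw [hμn n]; exact ENNReal.one_lt_top)).ne
  have hμπA : μπ A ≠ ⊤ :=
    ((measure_mono (Set.subset_univ A)).trans_lt
      (by rw [hμπu]; exact ENNReal.one_lt_top)).ne
  have hγA : γ A ≤ 1 := (measure_mono (Set.subset_univ A)).trans hγ1
  have hαA : α A ≤ 1 := (measure_mono (Set.subset_univ A)).trans hα1
  have hcpow : (c ^ n).toReal = (1 - β) ^ n := by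
    rw [ENNReal.toReal_pow, hcdef, ENNReal.toReal_ofReal h1β]
  have hcγne : c ^ n * γ A ≠ ⊤ :=
    ENNReal.mul_ne_top (ENNReal.pow_ne_top hcne) (hγA.trans_lt ENNReal.one_lt_top).ne
  have hcαne : c ^ n * α A ≠ ⊤ :=
    ENNReal.mul_ne_top (ENNReal.pow_ne_top hcne) (hαA.trans_lt ENNReal.one_lt_top).ne
  have hreal : ((bindIter (Measure.dirac θ0) P n) A).toReal + (c ^ n * γ A).toReal
      = (μπ A).toReal + (c ^ n * α A).toReal := by
    rw [← ENNReal.toReal_add hμnA hcγne, ← ENNReal.toReal_add hμπA hcαne, hEA]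
  have hu : (c ^ n * γ A).toReal ≤ (1 - β) ^ n := by
    rw [ENNReal.toReal_mul, hcpow]
    calc (1 - β) ^ n * (γ A).toReal ≤ (1 - β) ^ n * 1 := by
          refine mul_le_mul_of_nonneg_left ?_ (pow_nonneg h1β n)
          simpa using ENNReal.toReal_mono ENNReal.one_ne_top hγA
      _ = (1 - β) ^ n := mul_one _
  have hv : (c ^ n * α A).toReal ≤ (1 - β) ^ n := by
    rw [ENNReal.toReal_mul, hcpow]
    calc (1 - β) ^ n * (α A).toReal ≤ (1 - β) ^ n * 1 := by
          refine mul_le_mul_of_nonneg_left ?_ (pow_nonneg h1β n)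
          simpa using ENNReal.toReal_mono ENNReal.one_ne_top hαA
      _ = (1 - β) ^ n := mul_one _
  have hu0 : 0 ≤ (c ^ n * γ A).toReal := ENNReal.toReal_nonneg
  have hv0 : 0 ≤ (c ^ n * α A).toReal := ENNReal.toReal_nonneg
  rw [abs_le]
  constructor <;> linarith
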